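/- Let d ≥ 1 and let P_n denote the n-step transition probabilities of the simple random walk on Z^d with holding, and let φ_n be the Gaussian kernel. Then for every β with 0 < β < 1/√d there exist constants L = L(β) > 0 and C = C(β) > 0 such that for all integers n ≥ 2 and all x ∈ Z^d with |x| ≥ √(L n log n), one has P_n(x) ≤ C φ_n(βx)/√n. -/

import Mathlib

open scoped BigOperators

/-- Euclidean norm of a lattice point in `ℤ^d`. -/
noncomputable def latNorm {d : ℕ} (x : Fin d → ℤ) : ℝ :=
  Real.sqrt (∑ i, ((x i : ℝ)) ^ 2)

/-- Coercion of a lattice point to a real vector. -/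
def toRealVec {d : ℕ} (x : Fin d → ℤ) : Fin d → ℝ := fun i => (x i : ℝ)

/-- One-step transition kernel of the simple random walk on `ℤ^d` with holding. -/
noncomputable def srwStep (d : ℕ) (x : Fin d → ℤ) : ℝ :=
  if latNorm x ≤ 1 then 1 / (2 * (d : ℝ) + 1) else 0

/-- `n`-step transition probabilities of the simple random walk on `ℤ^d` with holding,
defined by convolution powers with `P₀ = δ₀`. -/
noncomputable def srwP (d : ℕ) : ℕ → (Fin d → ℤ) → ℝ
  | 0 => fun x => if x = 0 then 1 else 0
  | n + 1 => fun x => ∑' y : Fin d → ℤ, srwP d n y * srwStep d (x - y)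

/-- The Gaussian (heat) kernel on `ℝ^d`: `φ_t(x) = (2πt)^{-d/2} exp(-|x|²/(2t))`. -/
noncomputable def gauss (d : ℕ) (t : ℝ) (x : Fin d → ℝ) : ℝ :=
  (2 * Real.pi * t) ^ (-(d : ℝ) / 2) * Real.exp (-(∑ i, (x i) ^ 2) / (2 * t))

/- ## Auxiliary lemmas -/

lemma latNorm_eq_norm {d : ℕ} (x : Fin d → ℤ) :
    latNorm x = ‖(WithLp.equiv 2 (Fin d → ℝ)).symm (fun i => (x i : ℝ))‖ := by
  rw [EuclideanSpace.norm_eq]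
  simp [latNorm, sq_abs]

lemma latNorm_triangle {d : ℕ} (x y : Fin d → ℤ) :
    latNorm x ≤ latNorm y + latNorm (x - y) := by
  rw [latNorm_eq_norm, latNorm_eq_norm, latNorm_eq_norm]
  have h : (WithLp.equiv 2 (Fin d → ℝ)).symm (fun i => ((x - y) i : ℝ))
      = (WithLp.equiv 2 (Fin d → ℝ)).symm (fun i => (x i : ℝ))
        - (WithLp.equiv 2 (Fin d → ℝ)).symm (fun i => (y i : ℝ)) := by
    show WithLp.toLp 2 _ = WithLp.toLp 2 _ - WithLp.toLp 2 _
    rw [← WithLp.toLp_sub]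
    congr 1
    funext i
    simp only [Pi.sub_apply]
    push_cast
    rfl
  rw [h]
  exact norm_le_norm_add_norm_sub' _ _

lemma abs_coord_le_latNorm {d : ℕ} (x : Fin d → ℤ) (i : Fin d) :
    |(x i : ℝ)| ≤ latNorm x := by
  rw [← Real.sqrt_sq_eq_abs]
  apply Real.sqrt_le_sqrt
  exact Finset.single_le_sum (f := fun j => ((x j : ℝ))^2) (fun j _ => sq_nonneg _)
    (Finset.mem_univ i)

lemma srwStep_nonneg (d : ℕ) (x : Fin d → ℤ) : 0 ≤ srwStep d x := by
  unfold srwStep; split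
  · positivity
  · exact le_refl _

lemma srwStep_le (d : ℕ) (x : Fin d → ℤ) : srwStep d x ≤ 1 / (2 * (d : ℝ) + 1) := by
  unfold srwStep; split
  · exact le_refl _
  · positivity

/-- The finite support of the one-step kernel. -/
def srwSupp (d : ℕ) : Finset (Fin d → ℤ) :=
  insert 0 ((Finset.univ.image fun i => Pi.single i 1) ∪
    (Finset.univ.image fun i => Pi.single i (-1)))

lemma mem_srwSupp_of {d : ℕ} {z : Fin d → ℤ} (hz : latNorm z ≤ 1) : z ∈ srwSupp d := by
  have hsum : (∑ i, (z i) ^ 2 : ℤ) ≤ 1 := by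
    have h0 : (0:ℝ) ≤ ∑ i, ((z i : ℝ)) ^ 2 := by positivity
    have h1 : (∑ i, ((z i : ℝ)) ^ 2) ≤ 1 := by
      have hz' : Real.sqrt (∑ i, ((z i : ℝ)) ^ 2) ≤ 1 := hz
      nlinarith [Real.sq_sqrt h0, Real.sqrt_nonneg (∑ i, ((z i : ℝ)) ^ 2), hz']
    exact_mod_cast h1
  by_cases h0 : z = 0
  · simp [srwSupp, h0]
  · obtain ⟨i, hi⟩ : ∃ i, z i ≠ 0 := by
      by_contra h; push_neg at h; exact h0 (funext h)
    have hi1 : 1 ≤ (z i)^2 := by nlinarith [Int.one_le_abs hi, abs_nonneg (z i), sq_abs (z i)]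
    have hrest : ∀ j, j ≠ i → z j = 0 := by
      intro j hj
      by_contra hzj
      have hj1 : 1 ≤ (z j)^2 := by nlinarith [Int.one_le_abs hzj, abs_nonneg (z j), sq_abs (z j)]
      have hsub : ({i, j} : Finset (Fin d)) ⊆ Finset.univ := Finset.subset_univ _
      have hpair : (z i)^2 + (z j)^2 ≤ ∑ k, (z k)^2 := by
        have := Finset.sum_le_sum_of_subset_of_nonneg hsub
          (fun k _ _ => sq_nonneg (z k))
        rwa [Finset.sum_pair (Ne.symm hj)] at this
      omega
    have hzi : z i = 1 ∨ z i = -1 := by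
      have h2 : (z i)^2 ≤ 1 := by
        nlinarith [Finset.single_le_sum (f := fun j => (z j)^2)
          (fun j _ => sq_nonneg (z j)) (Finset.mem_univ i), hsum]
      have hb1 : -1 ≤ z i := by nlinarith [sq_nonneg (z i + 1)]
      have hb2 : z i ≤ 1 := by nlinarith [sq_nonneg (z i - 1)]
      omega
    have hz' : z = Pi.single i (z i) := by
      funext j
      by_cases hji : j = i
      · subst hji; simp
      · rw [Pi.single_eq_of_ne hji, hrest j hji]
    rcases hzi with h | h
    · apply Finset.mem_insert_of_mem
      apply Finset.mem_union_left
      exact Finset.mem_image.2 ⟨i, Finset.mem_univ i, by rw [hz', h]⟩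
    · apply Finset.mem_insert_of_mem
      apply Finset.mem_union_right
      exact Finset.mem_image.2 ⟨i, Finset.mem_univ i, by rw [hz', h]⟩

lemma srwStep_eq_zero {d : ℕ} {z : Fin d → ℤ} (hz : z ∉ srwSupp d) : srwStep d z = 0 := by
  unfold srwStep
  rw [if_neg]
  intro h
  exact hz (mem_srwSupp_of h)

lemma srwStep_latNorm_le {d : ℕ} {z : Fin d → ℤ} (hz : srwStep d z ≠ 0) : latNorm z ≤ 1 := by
  by_contra h
  exact hz (by unfold srwStep; rw [if_neg h])

/-- summability of convolution-type sums. -/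
lemma summable_conv {d : ℕ} (x : Fin d → ℤ) (f : (Fin d → ℤ) → ℝ) :
    Summable (fun y => f y * srwStep d (x - y)) := by
  apply summable_of_ne_finset_zero (s := (srwSupp d).image (fun z => x - z))
  intro y hy
  have hstep : srwStep d (x - y) = 0 := by
    apply srwStep_eq_zero
    intro hmem
    exact hy (Finset.mem_image.2 ⟨x - y, hmem, by ring⟩)
  rw [hstep, mul_zero]

lemma exp_add_exp_neg_le {t : ℝ} (ht : |t| ≤ 9/10) :
    Real.exp t + Real.exp (-t) ≤ 2 + (7/5) * t ^ 2 := by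
  have ht1 : |t| ≤ 1 := le_trans ht (by norm_num)
  have ht1' : |(-t)| ≤ 1 := by rwa [abs_neg]
  have h1 := Real.exp_bound ht1 (n := 3) (by norm_num)
  have h2 := Real.exp_bound ht1' (n := 3) (by norm_num)
  have hs1 : ∑ m ∈ Finset.range 3, t ^ m / m.factorial = 1 + t + t^2/2 := by
    norm_num [Finset.sum_range_succ, Nat.factorial]
  have hs2 : ∑ m ∈ Finset.range 3, (-t) ^ m / m.factorial = 1 - t + t^2/2 := by
    norm_num [Finset.sum_range_succ, Nat.factorial]
    ring
  rw [hs1] at h1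
  rw [hs2, abs_neg] at h2
  have hb1 := (abs_sub_le_iff.1 h1).1
  have hb2 := (abs_sub_le_iff.1 h2).1
  have hcube : |t| ^ 3 ≤ (9/10) * t ^ 2 := by
    have : |t| ^ 3 = |t| * t ^ 2 := by rw [← sq_abs]; ring
    rw [this]
    apply mul_le_mul_of_nonneg_right ht (sq_nonneg t)
  have hfac : ((Nat.succ 3 : ℕ) : ℝ) / ((Nat.factorial 3 : ℕ) * ((3:ℕ):ℝ)) = 2/9 := by
    norm_num [Nat.factorial]
  rw [hfac] at hb1 hb2
  nlinarith [hb1, hb2, hcube]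

/-- MGF bound for one step. -/
lemma mgf_le {d : ℕ} (hd : 1 ≤ d) (lam : Fin d → ℝ) (hlam : ∀ i, |lam i| ≤ 9/10) :
    ∑' z : Fin d → ℤ, srwStep d z * Real.exp (∑ i, lam i * (z i : ℝ))
      ≤ Real.exp ((7/15) * ∑ i, lam i ^ 2) := by
  have hd' : (3:ℝ) ≤ 2 * (d:ℝ) + 1 := by
    have : (1:ℝ) ≤ (d:ℝ) := by exact_mod_cast hd
    linarith
  have hsum : ∑' z : Fin d → ℤ, srwStep d z * Real.exp (∑ i, lam i * (z i : ℝ))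
      = ∑ z ∈ srwSupp d, srwStep d z * Real.exp (∑ i, lam i * (z i : ℝ)) := by
    apply tsum_eq_sum
    intro z hz
    rw [srwStep_eq_zero hz, zero_mul]
  rw [hsum]
  -- bound step by 1/(2d+1)
  have h1 : ∑ z ∈ srwSupp d, srwStep d z * Real.exp (∑ i, lam i * (z i : ℝ))
      ≤ (1 / (2 * (d:ℝ) + 1)) * ∑ z ∈ srwSupp d, Real.exp (∑ i, lam i * (z i : ℝ)) := by
    rw [Finset.mul_sum]
    apply Finset.sum_le_sum
    intro z _
    exact mul_le_mul_of_nonneg_right (srwStep_le d z) (Real.exp_pos _).le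
  -- compute the exponential sum
  have hnot0 : (0 : Fin d → ℤ) ∉ ((Finset.univ.image fun i => Pi.single i 1) ∪
      (Finset.univ.image fun i => Pi.single i (-1))) := by
    intro h
    rcases Finset.mem_union.1 h with h | h <;>
    · obtain ⟨i, _, hi⟩ := Finset.mem_image.1 h
      have := congrFun hi i
      simp at this
  have hkey1 : ∀ i j : Fin d, (Pi.single i (1:ℤ) : Fin d → ℤ) ≠ Pi.single j (-1:ℤ) := by
    intro i j h
    have h1 : (Pi.single i (1:ℤ) : Fin d → ℤ) i = (Pi.single j (-1:ℤ) : Fin d → ℤ) i := by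
      rw [h]
    rw [Pi.single_eq_same] at h1
    rcases eq_or_ne i j with rfl | hij
    · rw [Pi.single_eq_same] at h1; omega
    · rw [Pi.single_eq_of_ne hij] at h1; omega
  have hdisj : Disjoint (Finset.univ.image fun i : Fin d => Pi.single i (1:ℤ))
      (Finset.univ.image fun i : Fin d => Pi.single i (-1:ℤ)) := by
    rw [Finset.disjoint_left]
    intro a ha hb
    obtain ⟨i, _, hi⟩ := Finset.mem_image.1 ha
    obtain ⟨j, _, hj⟩ := Finset.mem_image.1 hb
    exact hkey1 i j (hi.trans hj.symm)
  have hinj1 : ∀ i ∈ (Finset.univ : Finset (Fin d)), ∀ j ∈ (Finset.univ : Finset (Fin d)),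
      (Pi.single i (1:ℤ) : Fin d → ℤ) = Pi.single j (1:ℤ) → i = j := by
    intro i _ j _ h
    by_contra hij
    have h1 : (Pi.single i (1:ℤ) : Fin d → ℤ) i = (Pi.single j (1:ℤ) : Fin d → ℤ) i := by
      rw [h]
    rw [Pi.single_eq_same, Pi.single_eq_of_ne (fun hh => hij hh)] at h1
    omega
  have hinj2 : ∀ i ∈ (Finset.univ : Finset (Fin d)), ∀ j ∈ (Finset.univ : Finset (Fin d)),
      (Pi.single i (-1:ℤ) : Fin d → ℤ) = Pi.single j (-1:ℤ) → i = j := by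
    intro i _ j _ h
    by_contra hij
    have h1 : (Pi.single i (-1:ℤ) : Fin d → ℤ) i = (Pi.single j (-1:ℤ) : Fin d → ℤ) i := by
      rw [h]
    rw [Pi.single_eq_same, Pi.single_eq_of_ne (fun hh => hij hh)] at h1
    omega
  have hdot1 : ∀ i : Fin d, (∑ j, lam j * ((Pi.single i (1:ℤ) : Fin d → ℤ) j : ℝ)) = lam i := by
    intro i
    rw [Finset.sum_eq_single i]
    · simp
    · intro j _ hj
      rw [Pi.single_eq_of_ne hj]
      simp
    · intro h; exact absurd (Finset.mem_univ i) h
  have hdot2 : ∀ i : Fin d, (∑ j, lam j * ((Pi.single i (-1:ℤ) : Fin d → ℤ) j : ℝ)) = -lam i := by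
    intro i
    rw [Finset.sum_eq_single i]
    · simp
    · intro j _ hj
      rw [Pi.single_eq_of_ne hj]
      simp
    · intro h; exact absurd (Finset.mem_univ i) h
  have hcompute : ∑ z ∈ srwSupp d, Real.exp (∑ i, lam i * (z i : ℝ))
      = 1 + ∑ i, (Real.exp (lam i) + Real.exp (-lam i)) := by
    unfold srwSupp
    rw [Finset.sum_insert hnot0, Finset.sum_union hdisj,
      Finset.sum_image hinj1, Finset.sum_image hinj2]
    have : Real.exp (∑ i, lam i * (((0 : Fin d → ℤ)) i : ℝ)) = 1 := by simp
    rw [this]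
    rw [Finset.sum_add_distrib]
    congr 1
    · congr 1
      · exact Finset.sum_congr rfl (fun i _ => by rw [hdot1 i])
      · exact Finset.sum_congr rfl (fun i _ => by rw [hdot2 i])
  have h2 : ∑ z ∈ srwSupp d, Real.exp (∑ i, lam i * (z i : ℝ))
      ≤ 1 + 2 * d + (7/5) * ∑ i, lam i ^ 2 := by
    rw [hcompute]
    have : ∑ i, (Real.exp (lam i) + Real.exp (-lam i))
        ≤ ∑ i, (2 + (7/5) * lam i ^ 2) := by
      apply Finset.sum_le_sum
      intro i _
      exact exp_add_exp_neg_le (hlam i)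
    have hr : ∑ i : Fin d, ((2:ℝ) + 7/5 * lam i ^ 2) = 2 * d + 7/5 * ∑ i, lam i ^ 2 := by
      rw [Finset.sum_add_distrib, Finset.sum_const, ← Finset.mul_sum, Finset.card_univ,
        Fintype.card_fin, nsmul_eq_mul]
      ring
    rw [hr, Finset.sum_add_distrib] at this
    rw [Finset.sum_add_distrib]
    linarith
  have hl2 : (0:ℝ) ≤ ∑ i, lam i ^ 2 := by positivity
  calc ∑ z ∈ srwSupp d, srwStep d z * Real.exp (∑ i, lam i * (z i : ℝ))
      ≤ (1 / (2 * (d:ℝ) + 1)) * (1 + 2 * d + (7/5) * ∑ i, lam i ^ 2) := by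
        apply le_trans h1
        apply mul_le_mul_of_nonneg_left h2 (by positivity)
    _ = 1 + (7/5) * (∑ i, lam i ^ 2) / (2 * (d:ℝ) + 1) := by
        field_simp
        ring
    _ ≤ 1 + (7/15) * ∑ i, lam i ^ 2 := by
        have : (7/5) * (∑ i, lam i ^ 2) / (2 * (d:ℝ) + 1) ≤ (7/15) * ∑ i, lam i ^ 2 := by
          rw [div_le_iff₀ (by linarith)]
          nlinarith
        linarith
    _ ≤ Real.exp ((7/15) * ∑ i, lam i ^ 2) := by
        have := Real.add_one_le_exp ((7/15) * ∑ i, lam i ^ 2)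
        linarith

/-- Chernoff bound by induction on n. -/
lemma srwP_chernoff {d : ℕ} (hd : 1 ≤ d) (lam : Fin d → ℝ) (hlam : ∀ i, |lam i| ≤ 9/10) :
    ∀ n (x : Fin d → ℤ), srwP d n x
      ≤ Real.exp (-(∑ i, lam i * (x i : ℝ)) + n * ((7/15) * ∑ i, lam i ^ 2)) := by
  intro n
  induction n with
  | zero =>
    intro x
    by_cases hx : x = 0
    · subst hx
      simp [srwP]
    · simp [srwP, hx]
      positivity
  | succ n ih =>
    intro x
    have hK : (0:ℝ) ≤ (7/15) * ∑ i, lam i ^ 2 := by positivity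
    set K := (7/15) * ∑ i, lam i ^ 2 with hKdef
    have hdotsub : ∀ y : Fin d → ℤ, (∑ i, lam i * ((x - y) i : ℝ))
        = (∑ i, lam i * (x i : ℝ)) - (∑ i, lam i * (y i : ℝ)) := by
      intro y
      rw [← Finset.sum_sub_distrib]
      apply Finset.sum_congr rfl
      intro i _
      simp only [Pi.sub_apply]
      push_cast
      ring
    calc srwP d (n+1) x = ∑' y : Fin d → ℤ, srwP d n y * srwStep d (x - y) := rfl
      _ ≤ ∑' y : Fin d → ℤ,
          Real.exp (-(∑ i, lam i * (y i : ℝ)) + n * K) * srwStep d (x - y) := by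
          apply Summable.tsum_le_tsum _ (summable_conv x _) (summable_conv x _)
          intro y
          exact mul_le_mul_of_nonneg_right (ih y) (srwStep_nonneg d _)
      _ = ∑' y : Fin d → ℤ, (Real.exp (n * K) * Real.exp (-(∑ i, lam i * (x i : ℝ))))
            * (srwStep d (x - y) * Real.exp (∑ i, lam i * ((x - y) i : ℝ))) := by
          apply tsum_congr
          intro y
          rw [hdotsub y]
          simp only [Real.exp_add, Real.exp_sub, Real.exp_neg]
          field_simp
      _ = (Real.exp (n * K) * Real.exp (-(∑ i, lam i * (x i : ℝ))))
            * ∑' y : Fin d → ℤ, srwStep d (x - y) * Real.exp (∑ i, lam i * ((x - y) i : ℝ)) :=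
          tsum_mul_left
      _ = (Real.exp (n * K) * Real.exp (-(∑ i, lam i * (x i : ℝ))))
            * ∑' z : Fin d → ℤ, srwStep d z * Real.exp (∑ i, lam i * (z i : ℝ)) := by
          congr 1
          exact (Equiv.subLeft x).tsum_eq
            (fun z => srwStep d z * Real.exp (∑ i, lam i * (z i : ℝ)))
      _ ≤ (Real.exp (n * K) * Real.exp (-(∑ i, lam i * (x i : ℝ)))) * Real.exp K := by
          apply mul_le_mul_of_nonneg_left (mgf_le hd lam hlam) (by positivity)
      _ = Real.exp (-(∑ i, lam i * (x i : ℝ)) + (n+1 : ℕ) * K) := by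
          rw [← Real.exp_add, ← Real.exp_add]
          congr 1
          push_cast
          ring

lemma srwP_nonneg {d : ℕ} : ∀ n (x : Fin d → ℤ), 0 ≤ srwP d n x := by
  intro n
  induction n with
  | zero => intro x; unfold srwP; split <;> norm_num
  | succ n ih =>
    intro x
    apply tsum_nonneg
    intro y
    exact mul_nonneg (ih y) (srwStep_nonneg d _)

lemma srwP_eq_zero_of_far {d : ℕ} : ∀ (n : ℕ) (x : Fin d → ℤ), ((n : ℕ) : ℝ) < latNorm x →
    srwP d n x = 0 := by
  intro n
  induction n with
  | zero =>
    intro x hx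
    have : x ≠ 0 := by
      intro h
      subst h
      have : latNorm (0 : Fin d → ℤ) = 0 := by simp [latNorm]
      rw [this] at hx
      norm_num at hx
    simp [srwP, this]
  | succ n ih =>
    intro x hx
    have : ∀ y : Fin d → ℤ, srwP d n y * srwStep d (x - y) = 0 := by
      intro y
      by_cases hs : srwStep d (x - y) = 0
      · rw [hs, mul_zero]
      · have h1 : latNorm (x - y) ≤ 1 := srwStep_latNorm_le hs
        have h2 : (n : ℝ) < latNorm y := by
          by_contra h
          push_neg at h
          have := latNorm_triangle x y
          push_cast at hx
          linarith
        rw [ih y h2, zero_mul]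
    calc srwP d (n+1) x = ∑' y : Fin d → ℤ, srwP d n y * srwStep d (x - y) := rfl
      _ = 0 := by
          have hz : (fun y : Fin d → ℤ => srwP d n y * srwStep d (x - y))
              = fun _ => 0 := funext this
          rw [hz, tsum_zero]

/-- large deviation region bound `P_n(x) ≤ C φ_n(βx)/√n`
for `|x| ≥ √(L n log n)`. -/
theorem srwP_le_gauss_far (d : ℕ) (hd : 1 ≤ d) (β : ℝ)
    (hβ0 : 0 < β) (hβ : β < 1 / Real.sqrt d) :
    ∃ L > (0 : ℝ), ∃ C > (0 : ℝ), ∀ n : ℕ, 2 ≤ n → ∀ x : Fin d → ℤ,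
      Real.sqrt (L * n * Real.log n) ≤ latNorm x →
      srwP d n x ≤ C * gauss d n (β • toRealVec x) / Real.sqrt n := by
  have hd1 : (1:ℝ) ≤ (d:ℝ) := by exact_mod_cast hd
  have hβ1 : β ≤ 1 := by
    have hsd : (1:ℝ) ≤ Real.sqrt d := by
      rw [show (1:ℝ) = Real.sqrt 1 by simp]
      exact Real.sqrt_le_sqrt hd1
    have : 1 / Real.sqrt d ≤ 1 := by
      rw [div_le_one (by linarith)]
      exact hsd
    linarith
  have hβsq : β ^ 2 ≤ 1 := by nlinarith
  refine ⟨250 * ((d:ℝ)+1) / 11, by positivity, (2 * Real.pi) ^ ((d:ℝ)/2),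
    Real.rpow_pos_of_pos (by positivity) _, ?_⟩
  intro n hn x hx
  have hn2 : (2:ℝ) ≤ n := by exact_mod_cast hn
  have hn0 : (0:ℝ) < n := by linarith
  have hn1 : (1:ℝ) ≤ n := by linarith
  obtain ⟨Q, hQdef⟩ : ∃ Q : ℝ, Q = ∑ i, ((x i : ℝ)) ^ 2 := ⟨_, rfl⟩
  have hQ0 : (0:ℝ) ≤ Q := by rw [hQdef]; positivity
  have hlat : latNorm x = Real.sqrt Q := by rw [hQdef]; rfl
  -- gauss rewrite
  have hgsum : ∑ i, ((β • toRealVec x) i) ^ 2 = β ^ 2 * Q := by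
    rw [hQdef, Finset.mul_sum]
    apply Finset.sum_congr rfl
    intro i _
    simp [toRealVec]
    ring
  have hgauss : gauss d n (β • toRealVec x)
      = (2 * Real.pi * n) ^ (-(d:ℝ)/2) * Real.exp (-(β^2 * Q) / (2 * n)) := by
    unfold gauss
    rw [hgsum]
  by_cases hfar : (n : ℝ) < latNorm x
  · rw [srwP_eq_zero_of_far n x hfar, hgauss]
    have h1 : (0:ℝ) < (2 * Real.pi * n) ^ (-(d:ℝ)/2) :=
      Real.rpow_pos_of_pos (by positivity) _
    positivity
  · push_neg at hfar
    rw [hlat] at hfar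
    have hQn : Q ≤ (n:ℝ)^2 := by
      apply (Real.sqrt_le_sqrt_iff (by positivity)).1
      rwa [Real.sqrt_sq hn0.le]
    -- the Chernoff parameter
    obtain ⟨lam, hlamdef⟩ : ∃ lam : Fin d → ℝ, lam = fun i => (9/10) * (x i : ℝ) / n :=
      ⟨_, rfl⟩
    have hlam : ∀ i, |lam i| ≤ 9/10 := by
      intro i
      have h1 : |(x i : ℝ)| ≤ (n:ℝ) := by
        have := abs_coord_le_latNorm x i
        rw [hlat] at this
        exact le_trans this hfar
      have : |lam i| = (9/10) * |(x i : ℝ)| / n := by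
        rw [hlamdef]
        rw [abs_div, abs_mul, abs_of_pos hn0,
          abs_of_pos (show (0:ℝ) < 9/10 by norm_num)]
      rw [this]
      rw [div_le_iff₀ hn0]
      nlinarith
    have hdot : ∑ i, lam i * (x i : ℝ) = (9/10) * Q / n := by
      rw [hQdef, hlamdef, Finset.mul_sum, Finset.sum_div]
      apply Finset.sum_congr rfl
      intro i _
      ring
    have hsq : ∑ i, lam i ^ 2 = (81/100) * Q / n^2 := by
      rw [hQdef, hlamdef, Finset.mul_sum, Finset.sum_div]
      apply Finset.sum_congr rfl
      intro i _
      ring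
    have hcher := srwP_chernoff hd lam hlam n x
    have hkey : srwP d n x ≤ Real.exp (-(261/500) * Q / n) := by
      apply le_trans hcher
      apply le_of_eq
      congr 1
      rw [hdot, hsq]
      field_simp
      ring
    -- log bound
    have hlog : 0 ≤ Real.log n := Real.log_nonneg hn1
    have hQge : (250 * ((d:ℝ)+1) / 11) * n * Real.log n ≤ Q := by
      apply (Real.sqrt_le_sqrt_iff hQ0).1
      rwa [hlat] at hx
    -- assemble
    have hchain : srwP d n x ≤ Real.exp (-(β^2 * Q) / (2 * n))
        * Real.exp (Real.log n * (-((d:ℝ)+1)/2)) := by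
      rw [← Real.exp_add]
      apply le_trans hkey
      apply Real.exp_le_exp.2
      have h1 : -(261/500) * Q / n
          = -(β^2 * Q) / (2*n) + (-((261/500) - β^2/2) * (Q/n)) := by
        field_simp
        ring
      rw [h1]
      have h2 : -((261/500) - β^2/2) * (Q/n) ≤ -(11/500) * (Q/n) := by
        have hQn' : 0 ≤ Q / n := by positivity
        have hprod : 0 ≤ (1 - β^2) * (Q/n) :=
          mul_nonneg (by linarith) hQn'
        nlinarith only [hprod]
      have h3 : -(11/500) * (Q/n) ≤ Real.log n * (-((d:ℝ)+1)/2) := by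
        have : (250 * ((d:ℝ)+1) / 11) * Real.log n ≤ Q / n := by
          rw [le_div_iff₀ hn0]
          calc (250 * ((d:ℝ)+1) / 11) * Real.log n * n
              = (250 * ((d:ℝ)+1) / 11) * n * Real.log n := by ring
            _ ≤ Q := hQge
        have h4 := mul_le_mul_of_nonneg_left this (show (0:ℝ) ≤ 11/500 by norm_num)
        nlinarith only [h4]
      linarith only [h2, h3]
    -- final equality of the RHS
    have hrpow : Real.exp (Real.log n * (-((d:ℝ)+1)/2)) = (n:ℝ) ^ (-((d:ℝ)+1)/2) := by
      rw [Real.rpow_def_of_pos hn0]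
    have hRHS : (2 * Real.pi) ^ ((d:ℝ)/2) * gauss d n (β • toRealVec x) / Real.sqrt n
        = Real.exp (-(β^2 * Q) / (2 * n)) * (n:ℝ) ^ (-((d:ℝ)+1)/2) := by
      rw [hgauss]
      rw [Real.mul_rpow (by positivity) (le_of_lt hn0)]
      rw [Real.sqrt_eq_rpow]
      have e1 : (2 * Real.pi) ^ ((d:ℝ)/2) * ((2 * Real.pi) ^ (-(d:ℝ)/2) * (n:ℝ) ^ (-(d:ℝ)/2)
          * Real.exp (-(β^2 * Q) / (2 * n))) / (n:ℝ) ^ ((1:ℝ)/2)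
          = ((2 * Real.pi) ^ ((d:ℝ)/2) * (2 * Real.pi) ^ (-(d:ℝ)/2))
            * Real.exp (-(β^2 * Q) / (2 * n)) * ((n:ℝ) ^ (-(d:ℝ)/2) / (n:ℝ) ^ ((1:ℝ)/2)) := by
        ring
      rw [e1]
      rw [← Real.rpow_add (by positivity), ← Real.rpow_sub hn0]
      rw [show (d:ℝ)/2 + -(d:ℝ)/2 = 0 by ring, Real.rpow_zero,
        show -(d:ℝ)/2 - (1:ℝ)/2 = -((d:ℝ)+1)/2 by ring]
      ring
    rw [hRHS]
    rw [← hrpow]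
    exact hchain
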